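/- arXiv:2301.01426 — 3 statements merged into one kernel-verified Lean document; each statement's English description precedes it below -/
import Mathlib

section
/- Suppose the bilinear form â on a real Hilbert space V is bounded and coercive (â(u,u) ≥ c₀ ‖u‖² for some c₀ > 0), and f ∈ V*. Then for any finite-dimensional subspace V_h ⊂ V there exists a unique u_h ∈ V_h with â(u_h, v) = f(v) for all v ∈ V_h, and if u ∈ V solves â(u, v) = f(v) for all v ∈ V, then ‖u − u_h‖ ≤ (C/c₀) inf_{w ∈ V_h} ‖u − w‖, where C is the boundedness constant of â (Céa's lemma for nonsymmetric forms). -/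
/-- Céa's lemma for bounded coercive (possibly nonsymmetric) bilinear forms:
unique solvability of the Galerkin problem on a finite-dimensional subspace and
quasi-optimality of the Galerkin solution. -/
theorem stmt_3 {V : Type*} [NormedAddCommGroup V] [InnerProductSpace ℝ V]
    [CompleteSpace V]
    (B : V →ₗ[ℝ] V →ₗ[ℝ] ℝ) (C c₀ : ℝ) (hc₀ : 0 < c₀)
    (hbdd : ∀ u v : V, |B u v| ≤ C * ‖u‖ * ‖v‖)
    (hcoer : ∀ u : V, B u u ≥ c₀ * ‖u‖ ^ 2)
    (f : V →L[ℝ] ℝ)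
    (Vh : Subspace ℝ V) [FiniteDimensional ℝ Vh] :
    ∃ uh ∈ Vh, (∀ v ∈ Vh, B uh v = f v) ∧
      (∀ uh' ∈ Vh, (∀ v ∈ Vh, B uh' v = f v) → uh' = uh) ∧
      ∀ u : V, (∀ v : V, B u v = f v) →
        ‖u - uh‖ ≤ (C / c₀) * ⨅ w : Vh, ‖u - (w : V)‖ := by
  classical
  -- if B x x ≤ 0 then x = 0
  have hzero : ∀ x : V, B x x ≤ 0 → x = 0 := by
    intro x hx
    have h1 := hcoer x
    have h2 : ‖x‖ ^ 2 = 0 := le_antisymm (by nlinarith) (by positivity)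
    have : ‖x‖ = 0 := by nlinarith [norm_nonneg x]
    exact norm_eq_zero.mp this
  -- the Galerkin operator on Vh
  set T : Vh →ₗ[ℝ] Module.Dual ℝ Vh :=
    (LinearMap.lcomp ℝ ℝ Vh.subtype).comp (B.comp Vh.subtype) with hT
  have hTapp : ∀ x y : Vh, T x y = B (x : V) (y : V) := fun x y => rfl
  have hinj : Function.Injective T := by
    intro x y h
    have hsub : T (x - y) = 0 := by rw [map_sub, h, sub_self]
    have h0 : B ((x : V) - y) ((x : V) - y) = 0 := by
      have := congrFun (congrArg (fun g : Module.Dual ℝ Vh => g.toFun) hsub) (x - y)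
      simpa [hTapp] using this
    have : ((x : V) - y) = 0 := hzero _ h0.le
    exact Subtype.ext (by rwa [sub_eq_zero] at this)
  have hsurj : Function.Surjective T :=
    (LinearMap.injective_iff_surjective_of_finrank_eq_finrank
      (Subspace.dual_finrank_eq).symm).mp hinj
  obtain ⟨xh, hxh⟩ := hsurj (f.toLinearMap.comp Vh.subtype)
  refine ⟨(xh : V), xh.2, ?_, ?_, ?_⟩
  · intro v hv
    have := congrFun (congrArg (fun g : Module.Dual ℝ Vh => g.toFun) hxh) ⟨v, hv⟩
    simpa [hTapp] using this
  · intro uh' h' hsol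
    have h0 : B (uh' - (xh : V)) (uh' - (xh : V)) = 0 := by
      have hmem : uh' - (xh : V) ∈ Vh := Vh.sub_mem h' xh.2
      have hs : ∀ v ∈ Vh, B uh' v = f v := hsol
      have hg : ∀ v ∈ Vh, B ((xh : V)) v = f v := by
        intro v hv
        have := congrFun (congrArg (fun g : Module.Dual ℝ Vh => g.toFun) hxh) ⟨v, hv⟩
        simpa [hTapp] using this
      have e1 := hs _ hmem
      have e2 := hg _ hmem
      simp only [map_sub, LinearMap.sub_apply] at e1 e2 ⊢
      linarith
    have := hzero _ h0.le
    rwa [sub_eq_zero] at this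
  · intro u hu
    -- Galerkin orthogonality
    have horth : ∀ v ∈ Vh, B (u - (xh : V)) v = 0 := by
      intro v hv
      have hg : B ((xh : V)) v = f v := by
        have := congrFun (congrArg (fun g : Module.Dual ℝ Vh => g.toFun) hxh) ⟨v, hv⟩
        simpa [hTapp] using this
      simp only [map_sub, LinearMap.sub_apply]
      rw [hu v, hg, sub_self]
    have hbdd0 : BddBelow (Set.range fun w : Vh => ‖u - (w : V)‖) :=
      ⟨0, by rintro x ⟨w, rfl⟩; exact norm_nonneg _⟩
    by_cases hC : 0 ≤ C
    · rw [Real.mul_iInf_of_nonneg (div_nonneg hC hc₀.le)]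
      refine le_ciInf fun w => ?_
      set z := u - (xh : V)
      have key : c₀ * ‖z‖ ^ 2 ≤ C * ‖z‖ * ‖u - (w : V)‖ := by
        have h1 : B z z ≤ B z (u - (w : V)) := by
          have h2 : u - (w : V) = z - ((w : V) - (xh : V)) := by
            show u - (w : V) = (u - (xh : V)) - ((w : V) - (xh : V)); abel
          rw [h2]
          conv_rhs => rw [map_sub]
          rw [horth _ (Vh.sub_mem w.2 xh.2), sub_zero]
        calc c₀ * ‖z‖ ^ 2 ≤ B z z := hcoer z
          _ ≤ B z (u - (w : V)) := h1
          _ ≤ |B z (u - (w : V))| := le_abs_self _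
          _ ≤ C * ‖z‖ * ‖u - (w : V)‖ := hbdd _ _
      rcases eq_or_lt_of_le (norm_nonneg z) with hz | hz
      · rw [← hz]
        positivity
      · rw [div_mul_eq_mul_div, le_div_iff₀ hc₀]
        nlinarith
    · -- C < 0 forces u = uh and the infimum is 0
      push_neg at hC
      have hz : u - (xh : V) = 0 := by
        refine hzero _ ?_
        calc B (u - (xh : V)) (u - (xh : V)) ≤ |B (u - (xh : V)) (u - (xh : V))| :=
              le_abs_self _
          _ ≤ C * ‖u - (xh : V)‖ * ‖u - (xh : V)‖ := hbdd _ _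
          _ ≤ 0 := mul_nonpos_of_nonpos_of_nonneg
                (mul_nonpos_of_nonpos_of_nonneg hC.le (norm_nonneg _)) (norm_nonneg _)
      have hu_mem : u ∈ Vh := by
        have : u = (xh : V) := by rwa [sub_eq_zero] at hz
        rw [this]; exact xh.2
      have hinf : (⨅ w : Vh, ‖u - (w : V)‖) = 0 := by
        refine le_antisymm ?_ (le_ciInf fun w => norm_nonneg _)
        have := ciInf_le hbdd0 (⟨u, hu_mem⟩ : Vh)
        simpa using this
      rw [hz, hinf, mul_zero, norm_zero]
end

section
/- Let V be a real Hilbert space, a : V × V → ℝ a bounded, coercive, symmetric bilinear form, and N : V × V → ℝ bounded bilinear with |N(u,v)| ≤ C_N ‖u‖ ‖v‖. Suppose u ∈ V satisfies a(u,v) + N(u,v) = f(v) for all v ∈ V, and ũ ∈ V satisfies a(ũ,v) = f(v) − N(w,v) for all v ∈ V, for some w ∈ V. Then ‖u − ũ‖ ≤ (C_N / c_a) ‖u − w‖, where c_a is the coercivity constant of a. (This is the error-contraction mechanism underlying step 2 of the iterative two-grid/two-level algorithms.) -/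
/-- The error-contraction mechanism of step 2 of the two-grid/two-level algorithm:
if `a(u,·) + N(u,·) = f` and `a(ut,·) = f − N(w,·)` then `‖u − ut‖ ≤ (C_N/c_a)‖u − w‖`. -/
theorem stmt_9 {V : Type*} [NormedAddCommGroup V] [InnerProductSpace ℝ V]
    [CompleteSpace V]
    (a N : V →ₗ[ℝ] V →ₗ[ℝ] ℝ) (Ca ca CN : ℝ) (hca : 0 < ca)
    (hsymm : ∀ u v : V, a u v = a v u)
    (habdd : ∀ u v : V, |a u v| ≤ Ca * ‖u‖ * ‖v‖)
    (hcoer : ∀ v : V, a v v ≥ ca * ‖v‖ ^ 2)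
    (hN : ∀ u v : V, |N u v| ≤ CN * ‖u‖ * ‖v‖)
    (f : V →L[ℝ] ℝ) (u ut w : V)
    (hu : ∀ v : V, a u v + N u v = f v)
    (hut : ∀ v : V, a ut v = f v - N w v) :
    ‖u - ut‖ ≤ (CN / ca) * ‖u - w‖ := by
  set e := u - ut with he
  have key : a e e = N (w - u) e := by
    have h1 := hu e
    have h2 := hut e
    have h3 : a u e - a ut e = N w e - N u e := by linarith
    have hae : a e = a u - a ut := by rw [he, map_sub]
    calc a e e = a u e - a ut e := by rw [hae, LinearMap.sub_apply]
      _ = N w e - N u e := h3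
      _ = N (w - u) e := by simp [map_sub, LinearMap.sub_apply]
  have hbound : ca * ‖e‖ ^ 2 ≤ CN * ‖u - w‖ * ‖e‖ := by
    calc ca * ‖e‖ ^ 2 ≤ a e e := hcoer e
      _ = N (w - u) e := key
      _ ≤ |N (w - u) e| := le_abs_self _
      _ ≤ CN * ‖w - u‖ * ‖e‖ := hN _ _
      _ = CN * ‖u - w‖ * ‖e‖ := by rw [norm_sub_rev]
  have hCN : 0 ≤ CN * ‖u - w‖ := by
    rcases eq_or_lt_of_le (norm_nonneg (u - w)) with hw | hw
    · rw [← hw]; ring_nf; simp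
    · have := (abs_nonneg (N (u - w) (u - w))).trans (hN (u - w) (u - w))
      nlinarith
  rcases eq_or_lt_of_le (norm_nonneg e) with h0 | h0
  · rw [← h0, div_mul_eq_mul_div]
    exact div_nonneg hCN hca.le
  · rw [div_mul_eq_mul_div, le_div_iff₀ hca]
    nlinarith
end

section
/- In the setting of the previous contraction lemma, if additionally C_N < c_a и the iteration u^{k+1} is defined by a(u^{k+1}, v) = f(v) − N(u^k + e^k, v) where e^k is any correction satisfying ‖(u − u^k) − e^k‖ ≤ ρ ‖u − u^k‖ for a fixed ρ ∈ (0,1), then ‖u − u^{k+1}‖ ≤ (C_N ρ / c_a) ‖u − u^k‖, so the iteration converges linearly with rate C_N ρ / c_a whenever C_N ρ < c_a. -/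
/-- Linear convergence of the two-grid/two-level iteration: if the coarse correction
`e^k` reduces the error by a factor `ρ < 1`, then
`‖u − u^{k+1}‖ ≤ (C_N ρ / c_a) ‖u − u^k‖`. -/
theorem stmt_10 {V : Type*} [NormedAddCommGroup V] [InnerProductSpace ℝ V]
    [CompleteSpace V]
    (a N : V →ₗ[ℝ] V →ₗ[ℝ] ℝ) (Ca ca CN ρ : ℝ) (hca : 0 < ca)
    (hsymm : ∀ u v : V, a u v = a v u)
    (habdd : ∀ u v : V, |a u v| ≤ Ca * ‖u‖ * ‖v‖)
    (hcoer : ∀ v : V, a v v ≥ ca * ‖v‖ ^ 2)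
    (hNbdd : ∀ u v : V, |N u v| ≤ CN * ‖u‖ * ‖v‖)
    (hCN : CN < ca) (hρ : ρ ∈ Set.Ioo (0 : ℝ) 1)
    (f : V →L[ℝ] ℝ) (u : V) (useq e : ℕ → V)
    (hu : ∀ v : V, a u v + N u v = f v)
    (hiter : ∀ k, ∀ v : V, a (useq (k + 1)) v = f v - N (useq k + e k) v)
    (hcorr : ∀ k, ‖(u - useq k) - e k‖ ≤ ρ * ‖u - useq k‖) :
    ∀ k, ‖u - useq (k + 1)‖ ≤ (CN * ρ / ca) * ‖u - useq k‖ := by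
  intro k
  set w := u - useq (k + 1) with hw
  have key : ∀ v : V, a w v = - N ((u - useq k) - e k) v := by
    intro v
    have h1 := hu v
    have h2 := hiter k v
    simp only [hw, map_sub, map_add, LinearMap.sub_apply, LinearMap.add_apply,
      LinearMap.neg_apply, map_neg] at *
    linarith
  rcases eq_or_lt_of_le (norm_nonneg (u - useq k)) with hx | hx
  · -- exact error is zero: then correction error is zero, so new error is zero
    have herr : ‖(u - useq k) - e k‖ = 0 := by
      have := hcorr k
      have : ‖(u - useq k) - e k‖ ≤ ρ * 0 := by rw [hx]; exact hcorr k
      nlinarith [norm_nonneg ((u - useq k) - e k)]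
    have herr0 : (u - useq k) - e k = 0 := norm_eq_zero.mp herr
    have hww : a w w = 0 := by rw [key w, herr0]; simp
    have := hcoer w
    have hsq : ‖w‖ ^ 2 = 0 := le_antisymm (by nlinarith) (sq_nonneg _)
    have hwn : ‖w‖ = 0 := by nlinarith [sq_nonneg ‖w‖, norm_nonneg w, sq_abs ‖w‖]
    rw [hwn, ← hx]
    ring_nf
    rfl
  · have hCN0 : 0 ≤ CN := by
      have h := hNbdd (u - useq k) (u - useq k)
      nlinarith [abs_nonneg (N (u - useq k) (u - useq k)), mul_pos hx hx]
    have hw2 : ca * ‖w‖ ^ 2 ≤ CN * ρ * ‖u - useq k‖ * ‖w‖ := by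
      have h1 : ca * ‖w‖ ^ 2 ≤ a w w := hcoer w
      have h2 : a w w = - N ((u - useq k) - e k) w := key w
      have h3 : - N ((u - useq k) - e k) w ≤ |N ((u - useq k) - e k) w| := neg_le_abs _
      have h4 := hNbdd ((u - useq k) - e k) w
      nlinarith [mul_le_mul_of_nonneg_right (mul_le_mul_of_nonneg_left (hcorr k) hCN0) (norm_nonneg w)]
    rcases eq_or_lt_of_le (norm_nonneg w) with h0 | h0
    · rw [← h0]
      have := hρ.1
      positivity
    · rw [div_mul_eq_mul_div, le_div_iff₀ hca]
      nlinarith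
end
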